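/- Let R = ℤ[z,w]/I, where I is the ideal of ℤ[z,w] generated by 2w − zw and w² − 2w, and let ℤ[θ,θ⁻¹] be the ring of Laurent polynomials over ℤ. Let r : R → ℤ[θ,θ⁻¹] be the ring homomorphism determined by r(z) = 2 − θ − θ⁻¹ and r(w) = 0 (well defined since both 2w − zw and w² − 2w map to 0). Then the kernel of r is exactly the ideal of R generated by the image of w. -/

import Mathlib

open MvPolynomial LaurentPolynomial

noncomputable def evq (q : ℚ) (hq : q ≠ 0) : LaurentPolynomial ℤ →ₐ[ℤ] ℚ :=
  AddMonoidAlgebra.lift ℤ ℚ ℤ ((Units.coeHom ℚ).comp (zpowersHom ℚˣ (Units.mk0 q hq)))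

lemma evq_T (q : ℚ) (hq : q ≠ 0) (n : ℤ) : evq q hq (T n) = q ^ n := by
  rw [evq, T, AddMonoidAlgebra.lift_single]
  simp [zpowersHom]


lemma aux_dvd (P : MvPolynomial (Fin 2) ℤ) :
    (X 1 : MvPolynomial (Fin 2) ℤ) ∣ P - aeval ![X 0, 0] P := by
  induction P using MvPolynomial.induction_on with
  | C a => simp
  | add p q hp hq =>
      have := dvd_add hp hq
      rw [map_add]
      convert this using 1
      ring
  | mul_X p n hp =>
      fin_cases n
      · show (X 1 : MvPolynomial (Fin 2) ℤ) ∣ p * X 0 - aeval ![X 0, 0] (p * X 0)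
        rw [map_mul]
        simp only [aeval_X, Matrix.cons_val_zero]
        have e : p * X 0 - aeval ![X 0, 0] p * X 0 = (p - aeval ![X 0, 0] p) * X 0 := by ring
        rw [e]
        exact Dvd.dvd.mul_right hp _
      · show (X 1 : MvPolynomial (Fin 2) ℤ) ∣ p * X 1 - aeval ![X 0, 0] (p * X 1)
        rw [map_mul]
        simp only [aeval_X, Matrix.cons_val_one, Matrix.head_cons, Matrix.cons_val_zero, mul_zero, sub_zero]
        exact Dvd.intro_left p rfl

lemma aux_inj (p0 : Polynomial ℤ)
    (h : ∀ q : ℚ, q ≠ 0 →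
      Polynomial.eval (2 - q - q⁻¹) (p0.map (Int.castRingHom ℚ)) = 0) : p0 = 0 := by
  have hF : p0.map (Int.castRingHom ℚ) = 0 := by
    apply Polynomial.eq_zero_of_infinite_isRoot
    refine Set.infinite_of_injective_forall_mem
      (f := fun n : ℕ => (2 : ℚ) - (n + 2) - ((n : ℚ) + 2)⁻¹) ?_ ?_
    · intro m n hmn
      have hm : (m : ℚ) + 2 ≠ 0 := by positivity
      have hn : (n : ℚ) + 2 ≠ 0 := by positivity
      simp only at hmn
      field_simp at hmn
      have h2 : ((m : ℚ) - n) * (((m : ℚ) + 2) * ((n : ℚ) + 2) - 1) = 0 := by nlinarith [hmn]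
      have h3 : ((m : ℚ) + 2) * ((n : ℚ) + 2) - 1 ≠ 0 := by nlinarith [Nat.cast_nonneg (α := ℚ) m, Nat.cast_nonneg (α := ℚ) n]
      have h4 : (m : ℚ) = n := by
        rcases mul_eq_zero.mp h2 with h' | h'
        · linarith
        · exact absurd h' h3
      exact_mod_cast h4
    · intro n
      exact h ((n : ℚ) + 2) (by positivity)
  have := Polynomial.map_injective (Int.castRingHom ℚ) Int.cast_injective
  exact this (by simpa using hF)
theorem stmt9
    (I : Ideal (MvPolynomial (Fin 2) ℤ))
    (hI : I = Ideal.span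
        {2 * X 1 - X 0 * X 1, (X 1) ^ 2 - 2 * X 1})
    (r : (MvPolynomial (Fin 2) ℤ ⧸ I) →+* LaurentPolynomial ℤ)
    (hz : r (Ideal.Quotient.mk I (X 0)) = 2 - T 1 - T (-1))
    (hw : r (Ideal.Quotient.mk I (X 1)) = 0) :
    RingHom.ker r = Ideal.span {Ideal.Quotient.mk I (X 1)} := by
  apply le_antisymm
  · intro p hp
    rw [RingHom.mem_ker] at hp
    obtain ⟨P, rfl⟩ := Ideal.Quotient.mk_surjective p
    obtain ⟨Q, hQ⟩ := aux_dvd P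
    set Q0 : MvPolynomial (Fin 2) ℤ := aeval ![X 0, 0] P with hQ0def
    have hP : P = Q0 + X 1 * Q := by rw [hQ0def]; linear_combination hQ
    -- r kills mk (X 1 * Q)
    have hXQ : r (Ideal.Quotient.mk I (X 1 * Q)) = 0 := by
      rw [map_mul, map_mul, hw, zero_mul]
    have hrQ0 : r (Ideal.Quotient.mk I Q0) = 0 := by
      have := hp
      rw [hP, map_add, map_add, hXQ, add_zero] at this
      exact this
    -- express Q0 via a one-variable polynomial
    set p0 : Polynomial ℤ := aeval ![Polynomial.X, 0] P with hp0def
    have hcomp : Polynomial.aeval (X 0 : MvPolynomial (Fin 2) ℤ) p0 = Q0 := by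
      rw [hp0def, hQ0def]
      have : (Polynomial.aeval (R := ℤ) (X 0 : MvPolynomial (Fin 2) ℤ)).comp
          (MvPolynomial.aeval ![Polynomial.X, 0]) = MvPolynomial.aeval ![X 0, 0] := by
        apply MvPolynomial.algHom_ext
        intro i
        fin_cases i <;> simp
      exact congrFun (congrArg DFunLike.coe this) P
    -- r ∘ mk ∘ Polynomial.aeval (X 0)  =  eval₂ at 2 - T 1 - T (-1)
    have hev : Polynomial.eval₂ (Int.castRingHom (LaurentPolynomial ℤ))
        (2 - T 1 - T (-1)) p0 = 0 := by
      have hhom : (r.comp (Ideal.Quotient.mk I)).comp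
            ((Polynomial.aeval (R := ℤ) (X 0 : MvPolynomial (Fin 2) ℤ)).toRingHom)
          = Polynomial.eval₂RingHom (Int.castRingHom (LaurentPolynomial ℤ))
            (2 - T 1 - T (-1)) := by
        apply Polynomial.ringHom_ext
        · intro a
          simp [Polynomial.C_eq_intCast, map_intCast]
        · simp [hz]
      have := congrFun (congrArg DFunLike.coe hhom) p0
      simp only [RingHom.coe_comp, Function.comp_apply, AlgHom.toRingHom_eq_coe,
        RingHom.coe_coe, Polynomial.coe_eval₂RingHom] at this
      rw [← this, hcomp, hrQ0]
    -- apply evq to get rational evaluations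
    have hq0 : p0 = 0 := by
      apply aux_inj
      intro q hq
      have := congrArg (evq q hq).toRingHom hev
      rw [map_zero, Polynomial.hom_eval₂] at this
      simp only [AlgHom.toRingHom_eq_coe, RingHom.coe_coe] at this
      have hT : (evq q hq) (2 - T 1 - T (-1)) = 2 - q - q⁻¹ := by
        rw [map_sub, map_sub, evq_T, evq_T, map_ofNat]
        norm_num
      rw [hT] at this
      rw [Polynomial.eval_map]
      have hcast : ((evq q hq).toRingHom).comp (Int.castRingHom (LaurentPolynomial ℤ))
          = Int.castRingHom ℚ := RingHom.ext_int _ _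
      rw [← this]
      exact congrArg (fun f => Polynomial.eval₂ f (2 - q - q⁻¹) p0) hcast.symm
    have hQ0zero : Q0 = 0 := by rw [← hcomp, hq0, map_zero]
    rw [hP, hQ0zero, zero_add, map_mul]
    exact Ideal.mem_span_singleton.mpr (Dvd.intro _ rfl)
  · rw [Ideal.span_le]
    intro x hx
    simp only [Set.mem_singleton_iff] at hx
    subst hx
    exact RingHom.mem_ker.mpr hw
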